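/- Let q₁, q₂ be the images under the exponential map of v₁, v₂ ∈ T₁ with ‖vᵢ‖ < π/4, i.e., qᵢ = cos(‖vᵢ‖)·1 + (sin‖vᵢ‖/‖vᵢ‖)·vᵢ. Then there is a constant M (independent of v₁, v₂) such that ‖q₁ − q₂‖_{L¹} ≤ M ‖v₁ − v₂‖_{L²}. -/
import Mathlib


open Set

open Real intervalIntegral


lemma my_intInt {f : ℝ → ℝ} (hf : ContinuousOn f (Icc 0 1)) :
    IntervalIntegrable f MeasureTheory.volume 0 1 := by
  apply ContinuousOn.intervalIntegrable
  rwa [uIcc_of_le zero_le_one]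

lemma my_cs {f g : ℝ → ℝ} (hf : ContinuousOn f (Icc 0 1)) (hg : ContinuousOn g (Icc 0 1)) :
    (∫ t in (0:ℝ)..1, f t * g t) ≤
      Real.sqrt (∫ t in (0:ℝ)..1, (f t)^2) * Real.sqrt (∫ t in (0:ℝ)..1, (g t)^2) := by
  set A := ∫ t in (0:ℝ)..1, (f t)^2 with hA
  set B := ∫ t in (0:ℝ)..1, (g t)^2 with hB
  set C := ∫ t in (0:ℝ)..1, f t * g t with hC
  have hAnn : 0 ≤ A := intervalIntegral.integral_nonneg zero_le_one (fun t _ => sq_nonneg _)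
  have hBnn : 0 ≤ B := intervalIntegral.integral_nonneg zero_le_one (fun t _ => sq_nonneg _)
  have hIf2 := my_intInt (hf.mul hf)
  have hIg2 := my_intInt (hg.mul hg)
  have hIfg := my_intInt (hf.mul hg)
  have key : ∀ x : ℝ, 0 ≤ A * (x * x) + (-2 * C) * x + B := by
    intro x
    have h0 : 0 ≤ ∫ t in (0:ℝ)..1, (x * f t - g t)^2 :=
      intervalIntegral.integral_nonneg zero_le_one (fun t _ => sq_nonneg _)
    have hI1 : IntervalIntegrable (fun t => (x*x) * (f t)^2) MeasureTheory.volume 0 1 :=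
      (my_intInt (hf.pow 2)).const_mul _
    have hI2 : IntervalIntegrable (fun t => (-2*x) * (f t * g t)) MeasureTheory.volume 0 1 :=
      hIfg.const_mul _
    have hI3 : IntervalIntegrable (fun t => (g t)^2) MeasureTheory.volume 0 1 :=
      my_intInt (hg.pow 2)
    have hexp : (∫ t in (0:ℝ)..1, (x * f t - g t)^2)
        = (x * x) * A + ((-2*x) * C + B) := by
      have e1 : (∫ t in (0:ℝ)..1, (x * f t - g t)^2)
          = ∫ t in (0:ℝ)..1, ((x*x) * (f t)^2 + ((-2*x) * (f t * g t) + (g t)^2)) :=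
        intervalIntegral.integral_congr (fun t _ => by ring)
      rw [e1, intervalIntegral.integral_add hI1 (hI2.add hI3),
        intervalIntegral.integral_add hI2 hI3,
        intervalIntegral.integral_const_mul, intervalIntegral.integral_const_mul, hA, hB, hC]
    nlinarith [h0, hexp]
  have hd := discrim_le_zero key
  have hC2 : C^2 ≤ A * B := by
    simp only [discrim] at hd
    nlinarith
  calc C ≤ |C| := le_abs_self C
    _ = Real.sqrt (C^2) := (Real.sqrt_sq_eq_abs C).symm
    _ ≤ Real.sqrt (A * B) := Real.sqrt_le_sqrt hC2
    _ = Real.sqrt A * Real.sqrt B := Real.sqrt_mul hAnn B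

lemma my_l1_le_l2 {w : ℝ → ℝ} (hw : ContinuousOn w (Icc 0 1)) :
    (∫ t in (0:ℝ)..1, |w t|) ≤ Real.sqrt (∫ t in (0:ℝ)..1, (w t)^2) := by
  have h := my_cs (f := fun t => |w t|) (g := fun _ => 1) hw.abs continuousOn_const
  simpa [sq_abs] using h

lemma my_minkowski {f g : ℝ → ℝ} (hf : ContinuousOn f (Icc 0 1)) (hg : ContinuousOn g (Icc 0 1)) :
    Real.sqrt (∫ t in (0:ℝ)..1, (f t + g t)^2) ≤
      Real.sqrt (∫ t in (0:ℝ)..1, (f t)^2) + Real.sqrt (∫ t in (0:ℝ)..1, (g t)^2) := by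
  set A := ∫ t in (0:ℝ)..1, (f t)^2 with hA
  set B := ∫ t in (0:ℝ)..1, (g t)^2 with hB
  have hAnn : 0 ≤ A := intervalIntegral.integral_nonneg zero_le_one (fun t _ => sq_nonneg _)
  have hBnn : 0 ≤ B := intervalIntegral.integral_nonneg zero_le_one (fun t _ => sq_nonneg _)
  have hcs := my_cs hf hg
  have hI1 : IntervalIntegrable (fun t => (f t)^2) MeasureTheory.volume 0 1 :=
    my_intInt (hf.pow 2)
  have hI2 : IntervalIntegrable (fun t => 2 * (f t * g t)) MeasureTheory.volume 0 1 :=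
    (my_intInt (hf.mul hg)).const_mul _
  have hI3 : IntervalIntegrable (fun t => (g t)^2) MeasureTheory.volume 0 1 :=
    my_intInt (hg.pow 2)
  have hexp : (∫ t in (0:ℝ)..1, (f t + g t)^2)
      = A + (2 * (∫ t in (0:ℝ)..1, f t * g t) + B) := by
    have e1 : (∫ t in (0:ℝ)..1, (f t + g t)^2)
        = ∫ t in (0:ℝ)..1, ((f t)^2 + (2 * (f t * g t) + (g t)^2)) :=
      intervalIntegral.integral_congr (fun t _ => by ring)
    rw [e1, intervalIntegral.integral_add hI1 (hI2.add hI3),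
      intervalIntegral.integral_add hI2 hI3,
      intervalIntegral.integral_const_mul, hA, hB]
  have h1 : (∫ t in (0:ℝ)..1, (f t + g t)^2) ≤ (Real.sqrt A + Real.sqrt B)^2 := by
    rw [hexp]
    have hA2 := Real.sq_sqrt hAnn
    have hB2 := Real.sq_sqrt hBnn
    nlinarith [hcs, Real.sqrt_nonneg A, Real.sqrt_nonneg B]
  calc Real.sqrt (∫ t in (0:ℝ)..1, (f t + g t)^2)
      ≤ Real.sqrt ((Real.sqrt A + Real.sqrt B)^2) := Real.sqrt_le_sqrt h1
    _ = Real.sqrt A + Real.sqrt B := Real.sqrt_sq (by positivity)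

lemma my_sinc_le_one (a : ℝ) : |Real.sin a / a| ≤ 1 := by
  rcases eq_or_ne a 0 with h | h
  · simp [h]
  · rw [abs_div, div_le_one (abs_pos.mpr h)]
    exact Real.abs_sin_le_abs

lemma my_sin_lip (a b : ℝ) : |Real.sin a - Real.sin b| ≤ |a - b| := by
  rw [Real.sin_sub_sin]
  calc |2 * Real.sin ((a - b) / 2) * Real.cos ((a + b) / 2)|
      = 2 * |Real.sin ((a - b) / 2)| * |Real.cos ((a + b) / 2)| := by
        rw [abs_mul, abs_mul]; norm_num
    _ ≤ 2 * |(a - b) / 2| * 1 :=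
        mul_le_mul (mul_le_mul_of_nonneg_left Real.abs_sin_le_abs (by norm_num))
          (Real.abs_cos_le_one _) (abs_nonneg _) (by positivity)
    _ = |a - b| := by rw [abs_div, abs_two]; ring

lemma my_cos_lip (a b : ℝ) : |Real.cos a - Real.cos b| ≤ |a - b| := by
  rw [Real.cos_sub_cos]
  calc |(-2) * Real.sin ((a + b) / 2) * Real.sin ((a - b) / 2)|
      = 2 * |Real.sin ((a + b) / 2)| * |Real.sin ((a - b) / 2)| := by
        rw [abs_mul, abs_mul]; norm_num
    _ ≤ 2 * 1 * |(a - b) / 2| :=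
        mul_le_mul (mul_le_mul_of_nonneg_left (Real.abs_sin_le_one _) (by norm_num))
          Real.abs_sin_le_abs (abs_nonneg _) (by positivity)
    _ = |a - b| := by rw [abs_div, abs_two]; ring

lemma my_sinc_lip {a b : ℝ} (hb : 0 ≤ b) :
    |Real.sin a / a - Real.sin b / b| * b ≤ 2 * |a - b| := by
  rcases eq_or_lt_of_le hb with h | hb
  · rw [← h, mul_zero]
    positivity
  · have hid : Real.sin a / a - Real.sin b / b
        = (Real.sin a - Real.sin b) / b + (Real.sin a / a) * ((b - a) / b) := by
      rcases eq_or_ne a 0 with ha | ha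
      · simp [ha, neg_div]
      · field_simp
        ring
    have h1 : |(Real.sin a - Real.sin b) / b| ≤ |a - b| / b := by
      rw [abs_div, abs_of_pos hb]
      exact div_le_div_of_nonneg_right (my_sin_lip a b) hb.le
    have h2 : |(Real.sin a / a) * ((b - a) / b)| ≤ |a - b| / b := by
      rw [abs_mul]
      calc |Real.sin a / a| * |(b - a) / b| ≤ 1 * |(b - a) / b| :=
            mul_le_mul_of_nonneg_right (my_sinc_le_one a) (abs_nonneg _)
        _ = |a - b| / b := by rw [one_mul, abs_div, abs_of_pos hb, abs_sub_comm]
    have h3 : |Real.sin a / a - Real.sin b / b| ≤ 2 * |a - b| / b := by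
      rw [hid]
      calc |(Real.sin a - Real.sin b) / b + (Real.sin a / a) * ((b - a) / b)|
          ≤ |a - b| / b + |a - b| / b := (abs_add_le _ _).trans (add_le_add h1 h2)
        _ = 2 * |a - b| / b := by ring
    calc |Real.sin a / a - Real.sin b / b| * b ≤ (2 * |a - b| / b) * b :=
          mul_le_mul_of_nonneg_right h3 hb.le
      _ = 2 * |a - b| := div_mul_cancel₀ _ hb.ne'

/-- If `qᵢ = cos(‖vᵢ‖)·1 + (sin‖vᵢ‖/‖vᵢ‖)·vᵢ` are the images under the exponential map
of tangent vectors `vᵢ ∈ T₁` with `‖vᵢ‖ < π/4`, then there is a constant `M`,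
independent of `v₁, v₂`, such that `‖q₁ − q₂‖_{L¹} ≤ M‖v₁ − v₂‖_{L²}`. -/
theorem exp_map_L1_lipschitz :
    ∃ M : ℝ, 0 < M ∧
      ∀ v₁ v₂ : ℝ → ℝ,
        ContinuousOn v₁ (Icc 0 1) → ContinuousOn v₂ (Icc 0 1) →
        (∫ t in (0:ℝ)..1, v₁ t) = 0 → (∫ t in (0:ℝ)..1, v₂ t) = 0 →
        Real.sqrt (∫ t in (0:ℝ)..1, (v₁ t)^2) < Real.pi / 4 →
        Real.sqrt (∫ t in (0:ℝ)..1, (v₂ t)^2) < Real.pi / 4 →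
        (∫ t in (0:ℝ)..1,
            |(Real.cos (Real.sqrt (∫ s in (0:ℝ)..1, (v₁ s)^2)) +
                (Real.sin (Real.sqrt (∫ s in (0:ℝ)..1, (v₁ s)^2)) /
                  Real.sqrt (∫ s in (0:ℝ)..1, (v₁ s)^2)) * v₁ t) -
              (Real.cos (Real.sqrt (∫ s in (0:ℝ)..1, (v₂ s)^2)) +
                (Real.sin (Real.sqrt (∫ s in (0:ℝ)..1, (v₂ s)^2)) /
                  Real.sqrt (∫ s in (0:ℝ)..1, (v₂ s)^2)) * v₂ t)|)
          ≤ M * Real.sqrt (∫ t in (0:ℝ)..1, (v₁ t - v₂ t)^2) := by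
  refine ⟨4, by norm_num, ?_⟩
  intro v₁ v₂ h₁ h₂ _ _ _ _
  set r₁ := Real.sqrt (∫ s in (0:ℝ)..1, (v₁ s)^2) with hr₁
  set r₂ := Real.sqrt (∫ s in (0:ℝ)..1, (v₂ s)^2) with hr₂
  set d := Real.sqrt (∫ t in (0:ℝ)..1, (v₁ t - v₂ t)^2) with hdd
  have hr₁nn : 0 ≤ r₁ := Real.sqrt_nonneg _
  have hr₂nn : 0 ≤ r₂ := Real.sqrt_nonneg _
  have hdnn : 0 ≤ d := Real.sqrt_nonneg _
  -- reverse triangle inequality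
  have hm1 : r₁ ≤ d + r₂ := by
    have h := my_minkowski (f := fun t => v₁ t - v₂ t) (g := v₂) (h₁.sub h₂) h₂
    have e : (∫ t in (0:ℝ)..1, ((v₁ t - v₂ t) + v₂ t)^2) = ∫ s in (0:ℝ)..1, (v₁ s)^2 :=
      intervalIntegral.integral_congr (fun t _ => by ring)
    rw [e] at h
    exact h
  have hm2 : r₂ ≤ d + r₁ := by
    have h := my_minkowski (f := fun t => v₂ t - v₁ t) (g := v₁) (h₂.sub h₁) h₁
    have e : (∫ t in (0:ℝ)..1, ((v₂ t - v₁ t) + v₁ t)^2) = ∫ s in (0:ℝ)..1, (v₂ s)^2 :=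
      intervalIntegral.integral_congr (fun t _ => by ring)
    have e2 : (∫ t in (0:ℝ)..1, (v₂ t - v₁ t)^2) = ∫ t in (0:ℝ)..1, (v₁ t - v₂ t)^2 :=
      intervalIntegral.integral_congr (fun t _ => by ring)
    rw [e, e2] at h
    exact h
  have habs : |r₁ - r₂| ≤ d := abs_sub_le_iff.mpr ⟨by linarith, by linarith⟩
  have hIv2 : (∫ t in (0:ℝ)..1, |v₂ t|) ≤ r₂ := my_l1_le_l2 h₂
  have hIdiff : (∫ t in (0:ℝ)..1, |v₁ t - v₂ t|) ≤ d := my_l1_le_l2 (h₁.sub h₂)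
  have hIdiffnn : 0 ≤ ∫ t in (0:ℝ)..1, |v₁ t - v₂ t| :=
    intervalIntegral.integral_nonneg zero_le_one (fun t _ => abs_nonneg _)
  have hIv2nn : 0 ≤ ∫ t in (0:ℝ)..1, |v₂ t| :=
    intervalIntegral.integral_nonneg zero_le_one (fun t _ => abs_nonneg _)
  have hcos : |Real.cos r₁ - Real.cos r₂| ≤ d := (my_cos_lip r₁ r₂).trans habs
  have hsinc : |Real.sin r₁ / r₁ - Real.sin r₂ / r₂| * r₂ ≤ 2 * d :=
    (my_sinc_lip hr₂nn).trans (by linarith)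
  -- pointwise bound, then integrate
  set c₁ := Real.sin r₁ / r₁ with hc₁
  set c₂ := Real.sin r₂ / r₂ with hc₂
  have hcontL : ContinuousOn
      (fun t => |(Real.cos r₁ + c₁ * v₁ t) - (Real.cos r₂ + c₂ * v₂ t)|) (Icc 0 1) :=
    (((continuousOn_const.add (continuousOn_const.mul h₁)).sub
      (continuousOn_const.add (continuousOn_const.mul h₂)))).abs
  have hcontR : ContinuousOn
      (fun t => |Real.cos r₁ - Real.cos r₂| + (|c₁| * |v₁ t - v₂ t| + |c₁ - c₂| * |v₂ t|))
      (Icc 0 1) :=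
    continuousOn_const.add ((continuousOn_const.mul (h₁.sub h₂).abs).add
      (continuousOn_const.mul h₂.abs))
  have hmono : (∫ t in (0:ℝ)..1, |(Real.cos r₁ + c₁ * v₁ t) - (Real.cos r₂ + c₂ * v₂ t)|)
      ≤ ∫ t in (0:ℝ)..1,
          (|Real.cos r₁ - Real.cos r₂| + (|c₁| * |v₁ t - v₂ t| + |c₁ - c₂| * |v₂ t|)) := by
    apply intervalIntegral.integral_mono_on zero_le_one (my_intInt hcontL) (my_intInt hcontR)
    intro t _
    have hid : (Real.cos r₁ + c₁ * v₁ t) - (Real.cos r₂ + c₂ * v₂ t)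
        = (Real.cos r₁ - Real.cos r₂) + (c₁ * (v₁ t - v₂ t) + (c₁ - c₂) * v₂ t) := by ring
    rw [hid]
    calc |(Real.cos r₁ - Real.cos r₂) + (c₁ * (v₁ t - v₂ t) + (c₁ - c₂) * v₂ t)|
        ≤ |Real.cos r₁ - Real.cos r₂| + |c₁ * (v₁ t - v₂ t) + (c₁ - c₂) * v₂ t| := abs_add_le _ _
      _ ≤ |Real.cos r₁ - Real.cos r₂| + (|c₁ * (v₁ t - v₂ t)| + |(c₁ - c₂) * v₂ t|) := by
          gcongr
          exact abs_add_le _ _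
      _ = |Real.cos r₁ - Real.cos r₂| + (|c₁| * |v₁ t - v₂ t| + |c₁ - c₂| * |v₂ t|) := by
          rw [abs_mul, abs_mul]
  have hsplit : (∫ t in (0:ℝ)..1,
        (|Real.cos r₁ - Real.cos r₂| + (|c₁| * |v₁ t - v₂ t| + |c₁ - c₂| * |v₂ t|)))
      = |Real.cos r₁ - Real.cos r₂| + (|c₁| * (∫ t in (0:ℝ)..1, |v₁ t - v₂ t|)
          + |c₁ - c₂| * (∫ t in (0:ℝ)..1, |v₂ t|)) := by
    have hIb : IntervalIntegrable (fun t => |c₁| * |v₁ t - v₂ t|) MeasureTheory.volume 0 1 :=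
      (my_intInt (h₁.sub h₂).abs).const_mul _
    have hIc : IntervalIntegrable (fun t => |c₁ - c₂| * |v₂ t|) MeasureTheory.volume 0 1 :=
      (my_intInt h₂.abs).const_mul _
    rw [intervalIntegral.integral_add intervalIntegrable_const (hIb.add hIc),
      intervalIntegral.integral_add hIb hIc,
      intervalIntegral.integral_const_mul, intervalIntegral.integral_const_mul,
      intervalIntegral.integral_const]
    simp
  have hterm2 : |c₁| * (∫ t in (0:ℝ)..1, |v₁ t - v₂ t|) ≤ d := by
    calc |c₁| * (∫ t in (0:ℝ)..1, |v₁ t - v₂ t|)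
        ≤ 1 * (∫ t in (0:ℝ)..1, |v₁ t - v₂ t|) :=
          mul_le_mul_of_nonneg_right (my_sinc_le_one r₁) hIdiffnn
      _ ≤ d := by rw [one_mul]; exact hIdiff
  have hterm3 : |c₁ - c₂| * (∫ t in (0:ℝ)..1, |v₂ t|) ≤ 2 * d := by
    calc |c₁ - c₂| * (∫ t in (0:ℝ)..1, |v₂ t|) ≤ |c₁ - c₂| * r₂ :=
          mul_le_mul_of_nonneg_left hIv2 (abs_nonneg _)
      _ ≤ 2 * d := hsinc
  calc (∫ t in (0:ℝ)..1, |(Real.cos r₁ + c₁ * v₁ t) - (Real.cos r₂ + c₂ * v₂ t)|)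
      ≤ |Real.cos r₁ - Real.cos r₂| + (|c₁| * (∫ t in (0:ℝ)..1, |v₁ t - v₂ t|)
          + |c₁ - c₂| * (∫ t in (0:ℝ)..1, |v₂ t|)) := hsplit ▸ hmono
    _ ≤ d + (d + 2 * d) := add_le_add hcos (add_le_add hterm2 hterm3)
    _ = 4 * d := by ring
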